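/- Let R be a right almost perfect ring and let I be a nonzero two-sided ideal of R. Then the following are equivalent: (i) I is a maximal two-sided ideal of R; (ii) I is a prime two-sided ideal of R; (iii) I is a right primitive ideal of R. -/

import Mathlib

universe u

/-- A ring is *right perfect* if it satisfies the descending chain condition
on principal left ideals. -/
def IsRightPerfectRing (R : Type u) [Ring R] : Prop :=
  ∀ f : ℕ → R, (∀ n, Ideal.span {f (n + 1)} ≤ Ideal.span {f n}) →
    ∃ N, ∀ n, N ≤ n → Ideal.span {f n} = Ideal.span {f N}

/-- A ring is *right almost perfect* if `R/I` is right perfect for every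
two-sided ideal `I` with `0 ≠ I ≠ R`. -/
def IsRightAlmostPerfectRing (R : Type u) [Ring R] : Prop :=
  ∀ I : TwoSidedIdeal R, I ≠ ⊥ → I ≠ ⊤ → IsRightPerfectRing I.ringCon.Quotient

/-- A two-sided ideal `P ≠ R` is *prime* if `I * J ⊆ P` implies `I ⊆ P` or `J ⊆ P`
for all two-sided ideals `I`, `J`. -/
def TwoSidedIdeal.IsPrimeTwoSided {R : Type u} [Ring R] (P : TwoSidedIdeal R) : Prop :=
  P ≠ ⊤ ∧ ∀ I J : TwoSidedIdeal R, (∀ a ∈ I, ∀ b ∈ J, a * b ∈ P) → I ≤ P ∨ J ≤ P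

/-- A two-sided ideal `P` is *right primitive* if it is the annihilator of some
simple right `R`-module. -/
def TwoSidedIdeal.IsRightPrimitive {R : Type u} [Ring R] (P : TwoSidedIdeal R) : Prop :=
  ∃ (M : Type u) (_ : AddCommGroup M) (_ : Module Rᵐᵒᵖ M), IsSimpleModule Rᵐᵒᵖ M ∧
    ∀ x : R, x ∈ P ↔ ∀ m : M, MulOpposite.op x • m = 0

section Core
variable {S : Type u} [Ring S]

lemma mem_span_single {a x : S} : x ∈ Ideal.span {a} ↔ ∃ r : S, r * a = x := by
  constructor
  · intro hx
    obtain ⟨r, hr⟩ := Submodule.mem_span_singleton.1 hx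
    exact ⟨r, by simpa [smul_eq_mul] using hr⟩
  · rintro ⟨r, rfl⟩
    exact Submodule.mem_span_singleton.2 ⟨r, by simp [smul_eq_mul]⟩

lemma self_mem_span {a : S} : a ∈ Ideal.span {a} := mem_span_single.2 ⟨1, one_mul a⟩

lemma span_single_le {a : S} {J : Ideal S} (h : a ∈ J) : Ideal.span {a} ≤ J :=
  (Submodule.span_singleton_le_iff_mem a J).2 h

def IsMinElt (q : S) : Prop :=
  q ≠ 0 ∧ ∀ b, b ∈ Ideal.span {q} → b ≠ 0 → q ∈ Ideal.span {b}

lemma no_strict_chain (hdcc : IsRightPerfectRing S) :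
    ¬ ∃ f : ℕ → S, (∀ n, f (n + 1) ∈ Ideal.span {f n}) ∧ ∀ n, f n ∉ Ideal.span {f (n + 1)} := by
  rintro ⟨f, h1, h2⟩
  obtain ⟨N, hN⟩ := hdcc f (fun n => span_single_le (h1 n))
  exact h2 N (by rw [hN (N + 1) (Nat.le_succ N)]; exact self_mem_span)

lemma exists_min (hdcc : IsRightPerfectRing S) {a : S} (ha : a ≠ 0) :
    ∃ q ∈ Ideal.span {a}, IsMinElt q := by
  by_contra hcon
  push_neg at hcon
  have step : ∀ q : S, q ∈ Ideal.span {a} → q ≠ 0 →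
      ∃ b, b ∈ Ideal.span {q} ∧ b ≠ 0 ∧ q ∉ Ideal.span {b} := by
    intro q hq hq0
    have := hcon q hq
    rw [IsMinElt] at this
    push_neg at this
    obtain ⟨b, hb1, hb2, hb3⟩ := this hq0
    exact ⟨b, hb1, hb2, hb3⟩
  let T := {x : S // x ∈ Ideal.span {a} ∧ x ≠ 0}
  have step' : ∀ p : T, ∃ b : T, b.1 ∈ Ideal.span {p.1} ∧ p.1 ∉ Ideal.span {b.1} := by
    rintro ⟨x, hx, hx0⟩
    obtain ⟨b, hb1, hb2, hb3⟩ := step x hx hx0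
    exact ⟨⟨b, span_single_le hx hb1, hb2⟩, hb1, hb3⟩
  let nxt : T → T := fun p => (step' p).choose
  let seq : ℕ → T := fun n => Nat.rec ⟨a, self_mem_span, ha⟩ (fun _ p => nxt p) n
  apply no_strict_chain hdcc
  refine ⟨fun n => (seq n).1, fun n => ?_, fun n => ?_⟩
  · exact (step' (seq n)).choose_spec.1
  · exact (step' (seq n)).choose_spec.2

end Core

section Core2
variable {S : Type u} [Ring S]

lemma exists_idem' (hprime : ∀ a b : S, a ≠ 0 → b ≠ 0 → ∃ s, a * s * b ≠ 0)
    {q : S} (hq : IsMinElt q) :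
    ∃ e : S, e * e = e ∧ e ≠ 0 ∧ e ∈ Ideal.span {q} ∧ IsMinElt e := by
  obtain ⟨hq0, hmin⟩ := hq
  obtain ⟨t, ht⟩ := hprime q q hq0 hq0
  set a := t * q with ha
  have hqa : q * a ≠ 0 := by rwa [ha, ← mul_assoc]
  have hqamem : q * a ∈ Ideal.span {q} := mem_span_single.2 ⟨q * t, by rw [ha, mul_assoc]⟩
  obtain ⟨r, hr⟩ := mem_span_single.1 (hmin _ hqamem hqa)
  set e := t * r * q with he
  have hea : e * a = a := by
    calc e * a = t * (r * (q * a)) := by rw [he]; noncomm_ring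
    _ = t * q := by rw [hr]
    _ = a := ha.symm
  have hemem : e ∈ Ideal.span {q} := mem_span_single.2 ⟨t * r, rfl⟩
  have ha0 : a ≠ 0 := fun h => hqa (by rw [h, mul_zero])
  have he0 : e ≠ 0 := fun h => ha0 (by rw [← hea, h, zero_mul])
  have hee : e * e = e := by
    by_contra hne
    have hmem2 : e * e - e ∈ Ideal.span {q} :=
      Submodule.sub_mem _ (Ideal.mul_mem_left _ e hemem) hemem
    obtain ⟨r', hr'⟩ := mem_span_single.1 (hmin _ hmem2 (sub_ne_zero.2 hne))
    apply hqa
    have h0 : (e * e - e) * a = 0 := by rw [sub_mul, mul_assoc, hea, hea, sub_self]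
    calc q * a = r' * (e * e - e) * a := by rw [hr']
    _ = r' * ((e * e - e) * a) := by rw [mul_assoc]
    _ = 0 := by rw [h0, mul_zero]
  have hle : Ideal.span {e} ≤ Ideal.span {q} := span_single_le hemem
  refine ⟨e, hee, he0, hemem, he0, fun b hb hb0 => ?_⟩
  have hqb := hmin b (hle hb) hb0
  exact span_single_le hqb hemem

lemma idem_mem_K (hprime : ∀ a b : S, a ≠ 0 → b ≠ 0 → ∃ s, a * s * b ≠ 0)
    {K : Set S} {k₀ : S} (hk₀ : k₀ ∈ K) (hk₀0 : k₀ ≠ 0)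
    (hKmul : ∀ s t : S, ∀ k ∈ K, s * k * t ∈ K)
    {e : S} (he : IsMinElt e) : e ∈ K := by
  obtain ⟨s, hs⟩ := hprime k₀ e hk₀0 he.1
  have hb : k₀ * s * e ∈ Ideal.span {e} := mem_span_single.2 ⟨k₀ * s, rfl⟩
  obtain ⟨r, hr⟩ := mem_span_single.1 (he.2 _ hb hs)
  have hK : r * k₀ * (s * e) ∈ K := hKmul r (s * e) k₀ hk₀
  have heq2 : r * k₀ * (s * e) = r * (k₀ * s * e) := by noncomm_ring
  rw [heq2, hr] at hK
  exact hK

lemma key_step (hprime : ∀ a b : S, a ≠ 0 → b ≠ 0 → ∃ s, a * s * b ≠ 0)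
    (hdcc : IsRightPerfectRing S)
    {K : Set S} {k₀ : S} (hk₀ : k₀ ∈ K) (hk₀0 : k₀ ≠ 0)
    (hKadd : ∀ x ∈ K, ∀ y ∈ K, x + y ∈ K)
    (hKmul : ∀ s t : S, ∀ k ∈ K, s * k * t ∈ K)
    {E : S} (hE : E * E = E) (hE1 : (1 : S) - E ≠ 0) :
    ∃ f : S, f * f = f ∧ f ∈ K ∧ f ≠ 0 ∧ E * f = 0 ∧ f * E = 0 := by
  obtain ⟨q, hqa, hq⟩ := exists_min hdcc hE1
  obtain ⟨e, hee, he0, heq, hemin⟩ := exists_idem' hprime hq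
  have heK : e ∈ K := idem_mem_K hprime hk₀ hk₀0 hKmul hemin
  have heE : e * E = 0 := by
    obtain ⟨r, hr⟩ := mem_span_single.1 (span_single_le hqa heq)
    have : r * ((1 : S) - E) * E = r * (E - E * E) := by noncomm_ring
    rw [← hr, this, hE, sub_self, mul_zero]
  refine ⟨e - E * e, ?_, ?_, ?_, ?_, ?_⟩
  · have expand : (e - E * e) * (e - E * e)
        = e * e - (e * E) * e - E * (e * e) + E * ((e * E) * e) := by noncomm_ring
    rw [expand, heE, hee, zero_mul, mul_zero, sub_zero, add_zero]
  · have hneg : -(E * e) ∈ K := by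
      have := hKmul (-E) 1 e heK
      rwa [show -E * e * 1 = -(E * e) by noncomm_ring] at this
    have := hKadd e heK _ hneg
    rwa [← sub_eq_add_neg] at this
  · intro h
    rw [sub_eq_zero] at h
    apply he0
    calc e = e * e := hee.symm
    _ = (E * e) * (E * e) := by rw [← h]
    _ = E * (e * E) * e := by noncomm_ring
    _ = 0 := by rw [heE, mul_zero, zero_mul]
  · rw [mul_sub, ← mul_assoc, hE]
    exact sub_self _
  · rw [sub_mul, heE, mul_assoc, heE, mul_zero, sub_zero]

lemma core (hprime : ∀ a b : S, a ≠ 0 → b ≠ 0 → ∃ s, a * s * b ≠ 0)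
    (hdcc : IsRightPerfectRing S)
    {K : Set S} {k₀ : S} (hk₀ : k₀ ∈ K) (hk₀0 : k₀ ≠ 0)
    (hKadd : ∀ x ∈ K, ∀ y ∈ K, x + y ∈ K)
    (hKmul : ∀ s t : S, ∀ k ∈ K, s * k * t ∈ K) : (1 : S) ∈ K := by
  by_contra h1K
  have h0K : (0 : S) ∈ K := by
    have := hKmul 0 0 k₀ hk₀
    rwa [zero_mul, zero_mul] at this
  have step : ∀ E : S, E * E = E → E ∈ K →
      ∃ f : S, f * f = f ∧ f ∈ K ∧ f ≠ 0 ∧ E * f = 0 ∧ f * E = 0 := by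
    intro E hE hEK
    have hE1 : (1 : S) - E ≠ 0 := by
      intro h
      rw [sub_eq_zero] at h
      exact h1K (h ▸ hEK)
    exact key_step hprime hdcc hk₀ hk₀0 hKadd hKmul hE hE1
  let T := {E : S // E * E = E ∧ E ∈ K}
  let F : T → S := fun p => (step p.1 p.2.1 p.2.2).choose
  have Fspec : ∀ p : T, (F p) * (F p) = F p ∧ F p ∈ K ∧ F p ≠ 0 ∧
      p.1 * (F p) = 0 ∧ (F p) * p.1 = 0 := fun p => (step p.1 p.2.1 p.2.2).choose_spec
  let nxt : T → T := fun p => ⟨p.1 + F p, by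
      obtain ⟨h1, h2, h3, h4, h5⟩ := Fspec p
      have : (p.1 + F p) * (p.1 + F p) = p.1 * p.1 + p.1 * F p + F p * p.1 + F p * F p := by
        noncomm_ring
      rw [this, p.2.1, h1, h4, h5, add_zero, add_zero],
    hKadd _ p.2.2 _ (Fspec p).2.1⟩
  let seq : ℕ → T := fun n => Nat.rec ⟨0, by rw [mul_zero], h0K⟩ (fun _ p => nxt p) n
  apply no_strict_chain hdcc
  refine ⟨fun n => 1 - (seq n).1, fun n => ?_, fun n => ?_⟩
  · show (1 : S) - (seq (n + 1)).1 ∈ Ideal.span {(1 : S) - (seq n).1}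
    have key : (1 : S) - (seq (n + 1)).1 = (1 - F (seq n)) * (1 - (seq n).1) := by
      show (1 : S) - ((seq n).1 + F (seq n)) = (1 - F (seq n)) * (1 - (seq n).1)
      have h5 := (Fspec (seq n)).2.2.2.2
      have expand : ((1 : S) - F (seq n)) * (1 - (seq n).1)
          = 1 - (seq n).1 - F (seq n) + F (seq n) * (seq n).1 := by noncomm_ring
      rw [expand, h5, add_zero, sub_sub]
    rw [key]
    exact mem_span_single.2 ⟨_, rfl⟩
  · show (1 : S) - (seq n).1 ∉ Ideal.span {(1 : S) - (seq (n + 1)).1}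
    intro hmem
    obtain ⟨x, hx⟩ := mem_span_single.1 hmem
    obtain ⟨h1, h2, h3, h4, h5⟩ := Fspec (seq n)
    apply h3
    have hg2 : ((1 : S) - (seq (n + 1)).1) * F (seq n) = 0 := by
      show ((1 : S) - ((seq n).1 + F (seq n))) * F (seq n) = 0
      have expand : ((1 : S) - ((seq n).1 + F (seq n))) * F (seq n)
          = F (seq n) - (seq n).1 * F (seq n) - F (seq n) * F (seq n) := by noncomm_ring
      rw [expand, h1, h4, sub_zero, sub_self]
    have hg3 : ((1 : S) - (seq n).1) * F (seq n) = F (seq n) := by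
      rw [sub_mul, one_mul, h4, sub_zero]
    have := congrArg (· * F (seq n)) hx
    simp only [mul_assoc] at this
    rw [hg2, mul_zero, hg3] at this
    exact this.symm

end Core2

section RingLevel
variable {R : Type u} [Ring R]

lemma eq_top_of_one_mem {I : TwoSidedIdeal R} (h : (1 : R) ∈ I) : I = ⊤ := by
  apply TwoSidedIdeal.ext
  intro x
  refine ⟨fun _ => TwoSidedIdeal.mem_top _, fun _ => ?_⟩
  have := I.mul_mem_left x 1 h
  rwa [mul_one] at this

lemma prime_elem {I : TwoSidedIdeal R} (hp : I.IsPrimeTwoSided)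
    {a b : R} (hab : ∀ s, a * s * b ∈ I) : a ∈ I ∨ b ∈ I := by
  let B : TwoSidedIdeal R :=
    TwoSidedIdeal.mk' {y | (∀ s, a * s * y ∈ I) ∧ a * y ∈ I}
    (by
      refine ⟨fun s => ?_, ?_⟩ <;> · rw [mul_zero]; exact I.zero_mem)
    (by
      intro x y hx hy
      refine ⟨fun s => ?_, ?_⟩
      · rw [mul_add]; exact I.add_mem (hx.1 s) (hy.1 s)
      · rw [mul_add]; exact I.add_mem hx.2 hy.2)
    (by
      intro x hx
      refine ⟨fun s => ?_, ?_⟩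
      · rw [mul_neg]; exact I.neg_mem (hx.1 s)
      · rw [mul_neg]; exact I.neg_mem hx.2)
    (by
      intro t y hy
      refine ⟨fun s => ?_, ?_⟩
      · rw [show a * s * (t * y) = a * (s * t) * y by noncomm_ring]; exact hy.1 (s * t)
      · rw [← mul_assoc]; exact hy.1 t)
    (by
      intro y t hy
      refine ⟨fun s => ?_, ?_⟩
      · rw [show a * s * (y * t) = (a * s * y) * t by noncomm_ring]
        exact I.mul_mem_right _ _ (hy.1 s)
      · rw [← mul_assoc]; exact I.mul_mem_right _ _ hy.2)
  let A : TwoSidedIdeal R :=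
    TwoSidedIdeal.mk' {x | ∀ y ∈ B, (∀ s, x * s * y ∈ I) ∧ x * y ∈ I}
    (by
      intro y _
      refine ⟨fun s => ?_, ?_⟩
      · rw [zero_mul, zero_mul]; exact I.zero_mem
      · rw [zero_mul]; exact I.zero_mem)
    (by
      intro x x' hx hx' y hy
      refine ⟨fun s => ?_, ?_⟩
      · rw [add_mul, add_mul]; exact I.add_mem ((hx y hy).1 s) ((hx' y hy).1 s)
      · rw [add_mul]; exact I.add_mem (hx y hy).2 (hx' y hy).2)
    (by
      intro x hx y hy
      refine ⟨fun s => ?_, ?_⟩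
      · rw [neg_mul, neg_mul]; exact I.neg_mem ((hx y hy).1 s)
      · rw [neg_mul]; exact I.neg_mem (hx y hy).2)
    (by
      intro t x hx y hy
      refine ⟨fun s => ?_, ?_⟩
      · rw [show t * x * s * y = t * (x * s * y) by noncomm_ring]
        exact I.mul_mem_left _ _ ((hx y hy).1 s)
      · rw [mul_assoc]; exact I.mul_mem_left _ _ (hx y hy).2)
    (by
      intro x t hx y hy
      refine ⟨fun s => ?_, ?_⟩
      · rw [show x * t * s * y = x * (t * s) * y by noncomm_ring]
        exact (hx y hy).1 (t * s)
      · exact (hx y hy).1 t)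
  have hbB : b ∈ B := by
    rw [TwoSidedIdeal.mem_mk']
    exact ⟨hab, by have := hab 1; rwa [mul_one] at this⟩
  have haA : a ∈ A := by
    rw [TwoSidedIdeal.mem_mk']
    intro y hy
    rw [TwoSidedIdeal.mem_mk'] at hy
    exact hy
  have hprod : ∀ x ∈ A, ∀ y ∈ B, x * y ∈ I := by
    intro x hx y hy
    rw [TwoSidedIdeal.mem_mk'] at hx
    exact (hx y hy).2
  rcases hp.2 A B hprod with h | h
  · exact Or.inl (h haA)
  · exact Or.inr (h hbB)

lemma coatom_prime {I : TwoSidedIdeal R} (hc : IsCoatom I) : I.IsPrimeTwoSided := by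
  refine ⟨hc.1, fun A B hAB => ?_⟩
  by_cases hA : A ≤ I
  · exact Or.inl hA
  right
  let C : TwoSidedIdeal R :=
    TwoSidedIdeal.mk' {x | ∀ b ∈ B, (∀ r, x * r * b ∈ I) ∧ x * b ∈ I}
    (by
      intro b _
      refine ⟨fun r => ?_, ?_⟩
      · rw [zero_mul, zero_mul]; exact I.zero_mem
      · rw [zero_mul]; exact I.zero_mem)
    (by
      intro x y hx hy b hb
      refine ⟨fun r => ?_, ?_⟩
      · rw [add_mul, add_mul]; exact I.add_mem ((hx b hb).1 r) ((hy b hb).1 r)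
      · rw [add_mul]; exact I.add_mem (hx b hb).2 (hy b hb).2)
    (by
      intro x hx b hb
      refine ⟨fun r => ?_, ?_⟩
      · rw [neg_mul, neg_mul]; exact I.neg_mem ((hx b hb).1 r)
      · rw [neg_mul]; exact I.neg_mem (hx b hb).2)
    (by
      intro t x hx b hb
      refine ⟨fun r => ?_, ?_⟩
      · rw [show t * x * r * b = t * (x * r * b) by noncomm_ring]
        exact I.mul_mem_left _ _ ((hx b hb).1 r)
      · rw [mul_assoc]; exact I.mul_mem_left _ _ (hx b hb).2)
    (by
      intro x t hx b hb
      refine ⟨fun r => ?_, ?_⟩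
      · rw [show x * t * r * b = x * (t * r) * b by noncomm_ring]
        exact (hx b hb).1 (t * r)
      · exact (hx b hb).1 t)
  have hIC : I ≤ C := by
    intro i hi
    rw [TwoSidedIdeal.mem_mk']
    exact fun b hb => ⟨fun r => I.mul_mem_right _ _ (I.mul_mem_right _ _ hi),
      I.mul_mem_right _ _ hi⟩
  have hAC : A ≤ C := by
    intro x hx
    rw [TwoSidedIdeal.mem_mk']
    exact fun b hb => ⟨fun r => hAB _ (A.mul_mem_right _ _ hx) b hb, hAB _ hx b hb⟩
  obtain ⟨x, hxA, hxI⟩ := SetLike.not_le_iff_exists.1 hA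
  have hlt : I < C := lt_of_le_of_ne hIC (fun h => hxI (h ▸ hAC hxA))
  have hCtop : C = ⊤ := hc.2 C hlt
  intro b hb
  have h1 : (1 : R) ∈ C := by rw [hCtop]; exact TwoSidedIdeal.mem_top _
  rw [TwoSidedIdeal.mem_mk'] at h1
  have := (h1 b hb).2
  rwa [one_mul] at this

end RingLevel

section RingLevel2
variable {R : Type u} [Ring R]

open MulOpposite in
lemma coatom_primitive {I : TwoSidedIdeal R} (hc : IsCoatom I) : I.IsRightPrimitive := by
  classical
  let J : Ideal Rᵐᵒᵖ :=
    { carrier := {x | x.unop ∈ I}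
      add_mem' := fun {x y} hx hy => by
        simp only [Set.mem_setOf_eq, unop_add] at *
        exact I.add_mem hx hy
      zero_mem' := by simp only [Set.mem_setOf_eq, unop_zero]; exact I.zero_mem
      smul_mem' := fun c x hx => by
        simp only [Set.mem_setOf_eq, smul_eq_mul, unop_mul] at *
        exact I.mul_mem_right _ _ hx }
  have hJtop : J ≠ ⊤ := by
    intro h
    have h1 : (1 : Rᵐᵒᵖ) ∈ J := h ▸ Submodule.mem_top
    exact hc.1 (eq_top_of_one_mem h1)
  obtain ⟨m, hm, hJm⟩ := Ideal.exists_le_maximal J hJtop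
  let M := Rᵐᵒᵖ ⧸ m
  have hsM : IsSimpleModule Rᵐᵒᵖ M := isSimpleModule_iff_isCoatom.2 (Ideal.isMaximal_def.1 hm)
  -- the annihilator predicate
  have hann : ∀ x : R, x ∈ I → ∀ mm : M, op x • mm = 0 := by
    intro x hx mm
    obtain ⟨r, rfl⟩ := Submodule.Quotient.mk_surjective m mm
    have : op x • Submodule.Quotient.mk (p := m) r = Submodule.Quotient.mk (op x • r) :=
      (Submodule.Quotient.mk_smul m _ _).symm
    rw [this, Submodule.Quotient.mk_eq_zero]
    have : op x • r = op (r.unop * x) := by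
      simp [smul_eq_mul, op_mul]
    rw [this]
    exact hJm (show (op (r.unop * x)).unop ∈ I from I.mul_mem_left r.unop x hx)
  let C : TwoSidedIdeal R := TwoSidedIdeal.mk' {z : R | ∀ mm : M, op z • mm = 0}
    (by intro mm; rw [op_zero, zero_smul])
    (by intro x y hx hy mm; rw [op_add, add_smul, hx mm, hy mm, add_zero])
    (by intro x hx mm; rw [op_neg, neg_smul, hx mm, neg_zero])
    (by intro x y hy mm; rw [op_mul, mul_smul]; exact hy _)
    (by intro x y hx mm; rw [op_mul, mul_smul, hx mm, smul_zero])
  have hIC : I ≤ C := by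
    intro x hx
    rw [TwoSidedIdeal.mem_mk']
    exact hann x hx
  have h1C : (1 : R) ∉ C := by
    intro h
    rw [TwoSidedIdeal.mem_mk'] at h
    have := h (Submodule.Quotient.mk 1)
    rw [op_one, one_smul, Submodule.Quotient.mk_eq_zero] at this
    exact hm.ne_top (Ideal.eq_top_iff_one m |>.2 this)
  have hIeqC : I = C := by
    rcases hIC.lt_or_eq with hlt | he
    · exact absurd (hc.2 C hlt ▸ TwoSidedIdeal.mem_top _ : (1 : R) ∈ C) h1C
    · exact he
  refine ⟨M, inferInstance, inferInstance, hsM, fun x => ?_⟩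
  constructor
  · intro hx
    exact hann x hx
  · intro hx
    rw [hIeqC, TwoSidedIdeal.mem_mk']
    exact hx

open MulOpposite in
lemma primitive_prime {P : TwoSidedIdeal R} (hp : P.IsRightPrimitive) : P.IsPrimeTwoSided := by
  obtain ⟨M, _, _, hsM, hmem⟩ := hp
  have hnt : Nontrivial M := IsSimpleModule.nontrivial Rᵐᵒᵖ M
  constructor
  · intro htop
    have h1 : (1 : R) ∈ P := htop ▸ TwoSidedIdeal.mem_top _
    obtain ⟨mm, hmm⟩ := exists_ne (0 : M)
    have := (hmem 1).1 h1 mm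
    rw [op_one, one_smul] at this
    exact hmm this
  · intro A B hAB
    by_cases hA : A ≤ P
    · exact Or.inl hA
    right
    obtain ⟨a, haA, haP⟩ := SetLike.not_le_iff_exists.1 hA
    have : ¬ ∀ mm : M, op a • mm = 0 := fun h => haP ((hmem a).2 h)
    push_neg at this
    obtain ⟨mm, hmm⟩ := this
    intro b hb
    rw [hmem]
    intro mm'
    have hspan : Submodule.span Rᵐᵒᵖ {op a • mm} = ⊤ := by
      rcases hsM.1.eq_bot_or_eq_top (Submodule.span Rᵐᵒᵖ {op a • mm}) with h | h
      · exact absurd (h ▸ Submodule.mem_span_singleton_self _ :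
          op a • mm ∈ (⊥ : Submodule Rᵐᵒᵖ M)) (by simpa using hmm)
      · exact h
    have hmm' : mm' ∈ Submodule.span Rᵐᵒᵖ {op a • mm} := hspan ▸ Submodule.mem_top
    obtain ⟨r, hr⟩ := Submodule.mem_span_singleton.1 hmm'
    have key : a * r.unop * b ∈ P := hAB _ (A.mul_mem_right _ _ haA) b hb
    have h0 := (hmem _).1 key mm
    have hop : op (a * r.unop * b) = op b * r * op a := by
      simp [op_mul, mul_assoc]
    rw [hop] at h0
    rw [← hr, smul_smul, smul_smul]
    exact h0

end RingLevel2

section Main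
variable {R : Type u} [Ring R]

lemma prime_coatom (h : IsRightAlmostPerfectRing R) {I : TwoSidedIdeal R} (hI : I ≠ ⊥)
    (hp : I.IsPrimeTwoSided) : IsCoatom I := by
  refine ⟨hp.1, fun J hJ => ?_⟩
  let S := I.ringCon.Quotient
  let mk : R →+* S := I.ringCon.mk'
  have hsurj : Function.Surjective mk := fun x => Quot.inductionOn x fun a => ⟨a, rfl⟩
  have hmk0 : ∀ x : R, mk x = 0 ↔ x ∈ I := by
    intro x
    have h1 : mk x = 0 ↔ (x : S) = ((0 : R) : S) := by
      rw [show ((0 : R) : S) = (0 : S) from I.ringCon.coe_zero]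
      exact Iff.rfl
    rw [h1, I.ringCon.eq, I.rel_iff, sub_zero]
  have hmk0' : ∀ x : R, (x : S) = 0 ↔ x ∈ I := hmk0
  have hprime : ∀ a b : S, a ≠ 0 → b ≠ 0 → ∃ s, a * s * b ≠ 0 := by
    intro a b ha hb
    obtain ⟨a', rfl⟩ := hsurj a
    obtain ⟨b', rfl⟩ := hsurj b
    by_contra hcon
    push_neg at hcon
    have hall : ∀ s, a' * s * b' ∈ I := by
      intro s
      apply (hmk0 _).1
      rw [map_mul, map_mul]
      exact hcon (mk s)
    rcases prime_elem hp hall with hmem | hmem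
    · exact ha ((hmk0 _).2 hmem)
    · exact hb ((hmk0 _).2 hmem)
  have hdcc : IsRightPerfectRing S := h I hI hp.1
  obtain ⟨j₀, hj₀J, hj₀I⟩ := SetLike.exists_of_lt hJ
  let K : Set S := mk '' J
  have hk₀ : mk j₀ ∈ K := ⟨j₀, hj₀J, rfl⟩
  have hk₀0 : mk j₀ ≠ 0 := fun h0 => hj₀I ((hmk0 _).1 h0)
  have hKadd : ∀ x ∈ K, ∀ y ∈ K, x + y ∈ K := by
    rintro _ ⟨u, hu, rfl⟩ _ ⟨v, hv, rfl⟩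
    exact ⟨u + v, J.add_mem hu hv, map_add mk u v⟩
  have hKmul : ∀ s t : S, ∀ k ∈ K, s * k * t ∈ K := by
    rintro s t _ ⟨u, hu, rfl⟩
    obtain ⟨s', rfl⟩ := hsurj s
    obtain ⟨t', rfl⟩ := hsurj t
    refine ⟨s' * u * t', J.mul_mem_right _ _ (J.mul_mem_left _ _ hu), ?_⟩
    rw [map_mul, map_mul]
  have h1K : (1 : S) ∈ K := core hprime hdcc hk₀ hk₀0 hKadd hKmul
  obtain ⟨w, hwJ, hw1⟩ := h1K
  have hw : mk w = mk 1 := by rw [hw1, map_one]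
  have hwI : w - 1 ∈ I := (I.rel_iff w 1).1 (I.ringCon.eq.1 hw)
  have h1J : (1 : R) ∈ J := by
    have := J.sub_mem hwJ (hJ.le hwI)
    rwa [sub_sub_cancel] at this
  exact eq_top_of_one_mem h1J

end Main

/-- In a right almost perfect ring, a nonzero two-sided ideal is maximal iff it is prime
iff it is right primitive. -/
theorem stmt2 {R : Type u} [Ring R] (h : IsRightAlmostPerfectRing R)
    (I : TwoSidedIdeal R) (hI : I ≠ ⊥) :
    (IsCoatom I ↔ I.IsPrimeTwoSided) ∧ (I.IsPrimeTwoSided ↔ I.IsRightPrimitive) := by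
  constructor
  · exact ⟨coatom_prime, prime_coatom h hI⟩
  · exact ⟨fun hp => coatom_primitive (prime_coatom h hI hp), primitive_prime⟩
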